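/- It holds that ∫₀¹ ∫₀^{2π} ∫_{−2π}^{2π} ρ³ (2 − 2cos w − w sin w)/w⁴ dw dθ dρ = (1/12)(1 + 2π·Si(2π)), where Si(2π) = ∫₀^{2π} (sin t)/t dt. (The integrand, a function of (ρ, θ, w), has a removable singularity at w = 0 with limiting value ρ³/12.) -/

import Mathlib

open Real MeasureTheory intervalIntegral Set Filter Topology

noncomputable def fH (w : ℝ) : ℝ := (2 - 2 * cos w - w * sin w) / w ^ 4

noncomputable def FH (w : ℝ) : ℝ :=
  (4 * (cos w - 1) + w * sin w + w ^ 2 * cos w) / (6 * w ^ 3)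
    + (1 / 6) * ∫ t in (0:ℝ)..w, sin t / t

lemma sinc_abs_le (t : ℝ) : |sin t / t| ≤ 1 := by
  rcases eq_or_ne t 0 with h | h
  · simp [h]
  · rw [abs_div]
    exact div_le_one_of_le₀ (abs_sin_le_abs) (abs_nonneg t)

lemma sinc_intervalIntegrable (a b : ℝ) :
    IntervalIntegrable (fun t => sin t / t) volume a b := by
  apply IntervalIntegrable.mono_fun' (g := fun _ => (1:ℝ)) intervalIntegrable_const
  · exact (Real.measurable_sin.div measurable_id).aestronglyMeasurable
  · exact Filter.Eventually.of_forall fun t => by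
      simp only [Real.norm_eq_abs]; exact sinc_abs_le t

lemma num_abs_le {w : ℝ} (hw : |w| ≤ 1) : |2 - 2 * cos w - w * sin w| ≤ |w| ^ 4 := by
  have hc := Real.cos_bound hw
  have hs := Real.sin_bound hw
  have key : 2 - 2 * cos w - w * sin w
      = -2 * (cos w - (1 - w ^ 2 / 2)) - w * (sin w - (w - w ^ 3 / 6)) + w ^ 4 / 6 := by
    ring
  rw [key]
  have h1 : |(-2 : ℝ) * (cos w - (1 - w ^ 2 / 2))| ≤ 2 * (|w| ^ 4 * (5/96)) := by
    rw [abs_mul]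
    exact mul_le_mul (by norm_num) hc (abs_nonneg _) (by norm_num)
  have h2 : |w * (sin w - (w - w ^ 3 / 6))| ≤ 1 * (|w| ^ 4 * (5/96)) := by
    rw [abs_mul]
    exact mul_le_mul hw (hs.trans (by have := pow_le_pow_of_le_one (abs_nonneg w) hw (by norm_num : 4 ≤ 5); have := pow_nonneg (abs_nonneg w) 4; linarith)) (abs_nonneg _) (by norm_num)
  have h3 : |w ^ 4 / 6| = |w| ^ 4 / 6 := by rw [abs_div, abs_pow]; norm_num
  have := abs_add_le ((-2 : ℝ) * (cos w - (1 - w ^ 2 / 2)) - w * (sin w - (w - w ^ 3 / 6)))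
    (w ^ 4 / 6)
  have h5 := abs_sub ((-2 : ℝ) * (cos w - (1 - w ^ 2 / 2))) (w * (sin w - (w - w ^ 3 / 6)))
  nlinarith [pow_nonneg (abs_nonneg w) 4]

lemma fH_abs_le (w : ℝ) : |fH w| ≤ 11 := by
  rcases eq_or_ne w 0 with h | h
  · simp [fH, h]
  have hw4 : (0:ℝ) < |w| ^ 4 := pow_pos (abs_pos.2 h) 4
  rw [fH, abs_div, abs_pow, div_le_iff₀ hw4]
  rcases le_or_gt |w| 1 with hw | hw
  · calc |2 - 2 * cos w - w * sin w| ≤ |w| ^ 4 := num_abs_le hw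
      _ ≤ 11 * |w| ^ 4 := by nlinarith
  · have h4 : (1:ℝ) ≤ |w| ^ 4 := one_le_pow₀ hw.le
    have hb : |2 - 2 * cos w - w * sin w| ≤ 4 + |w| := by
      have e1 : |2 - 2*cos w| ≤ 4 := by
        have ha : |2*cos w| ≤ 2 := by
          rw [abs_mul, abs_two]
          nlinarith [abs_cos_le_one w, abs_nonneg (cos w)]
        have hb := abs_sub (2:ℝ) (2*cos w)
        rw [abs_two] at hb
        linarith
      have e2 : |w * sin w| ≤ |w| := by
        rw [abs_mul]
        exact mul_le_of_le_one_right (abs_nonneg w) (abs_sin_le_one w)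
      have := abs_sub (2 - 2*cos w) (w * sin w)
      linarith
    have h2 : (1:ℝ) ≤ |w| ^ 2 := one_le_pow₀ hw.le
    have h3 : (1:ℝ) ≤ |w| ^ 3 := one_le_pow₀ hw.le
    have habs : |w| ≤ |w| ^ 4 := by nlinarith [abs_nonneg w]
    linarith

lemma fH_intervalIntegrable (a b : ℝ) : IntervalIntegrable fH volume a b := by
  apply IntervalIntegrable.mono_fun' (g := fun _ => (11:ℝ)) intervalIntegrable_const
  · exact (((measurable_const.sub (Real.measurable_cos.const_mul 2)).sub
      (measurable_id.mul Real.measurable_sin)).div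
      ((measurable_id.pow_const 4))).aestronglyMeasurable
  · exact Filter.Eventually.of_forall fun t => by
      simp only [Real.norm_eq_abs]; exact fH_abs_le t

lemma FH_hasDerivAt {w : ℝ} (hw : w ≠ 0) : HasDerivAt FH (fH w) w := by
  have hsi : HasDerivAt (fun u => ∫ t in (0:ℝ)..u, sin t / t) (sin w / w) w := by
    apply integral_hasDerivAt_right (sinc_intervalIntegrable 0 w)
    · exact ((Real.measurable_sin.div measurable_id).aestronglyMeasurable).stronglyMeasurableAtFilter
    · exact (Real.continuous_sin.continuousAt.div continuousAt_id hw)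
  have hnum : HasDerivAt (fun w => 4 * (cos w - 1) + w * sin w + w ^ 2 * cos w)
      (-3 * sin w + 3 * w * cos w - w ^ 2 * sin w) w := by
    have h1 := (Real.hasDerivAt_cos w)
    have h2 := (Real.hasDerivAt_sin w)
    have := (((h1.sub_const 1).const_mul 4).add
      ((hasDerivAt_id w).mul h2)).add
      (((hasDerivAt_pow 2 w)).mul h1)
    refine this.congr_deriv ?_
    simp only [id_eq]
    push_cast
    ring
  have hden : HasDerivAt (fun w : ℝ => 6 * w ^ 3) (18 * w ^ 2) w := by
    have := (hasDerivAt_pow 3 w).const_mul (6:ℝ)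
    refine this.congr_deriv ?_
    push_cast; ring
  have hdiv := hnum.div hden (by positivity)
  have := hdiv.add ((hsi.const_mul (1/6:ℝ)))
  refine this.congr_deriv ?_
  rw [fH]
  field_simp
  ring

lemma FH_tendsto_zero : Tendsto FH (𝓝[>] (0:ℝ)) (𝓝 0) := by
  have key : ∀ w ∈ Ioo (0:ℝ) 1, |FH w| ≤ w / 3 := by
    intro w hw
    have hw0 : (0:ℝ) < w := hw.1
    have hw1 : |w| ≤ 1 := by rw [abs_of_pos hw0]; exact hw.2.le
    have hc := Real.cos_bound hw1
    have hs := Real.sin_bound hw1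
    have habs : |w| = w := abs_of_pos hw0
    have hnum : |4 * (cos w - 1) + w * sin w + w ^ 2 * cos w| ≤ w ^ 4 := by
      have key : 4 * (cos w - 1) + w * sin w + w ^ 2 * cos w
          = (4 + w ^ 2) * (cos w - (1 - w ^ 2 / 2)) + w * (sin w - (w - w ^ 3 / 6))
            - 2 / 3 * w ^ 4 := by ring
      rw [key]
      rw [habs] at hc hs
      have h1 : |(4 + w ^ 2) * (cos w - (1 - w ^ 2 / 2))| ≤ 5 * (w ^ 4 * (5/96)) := by
        rw [abs_mul]
        apply mul_le_mul _ hc (abs_nonneg _) (by norm_num)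
        rw [abs_of_pos (by positivity)]
        nlinarith [hw.2, hw0]
      have h2 : |w * (sin w - (w - w ^ 3 / 6))| ≤ 1 * (w ^ 4 * (5/96)) := by
        rw [abs_mul, habs]
        exact mul_le_mul (by rw [← habs]; exact hw1) (hs.trans (by have := pow_le_pow_of_le_one hw0.le hw.2.le (by norm_num : 4 ≤ 5); have := pow_nonneg hw0.le 4; linarith)) (abs_nonneg _) (by norm_num)
      have h3 : |2/3 * w ^ 4| = 2/3 * w ^ 4 := abs_of_nonneg (by positivity)
      have h4 := abs_sub ((4 + w ^ 2) * (cos w - (1 - w ^ 2 / 2))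
        + w * (sin w - (w - w ^ 3 / 6))) (2/3 * w ^ 4)
      have h5 := abs_add_le ((4 + w ^ 2) * (cos w - (1 - w ^ 2 / 2)))
        (w * (sin w - (w - w ^ 3 / 6)))
      nlinarith [pow_nonneg hw0.le 4]
    have hsi : |∫ t in (0:ℝ)..w, sin t / t| ≤ w := by
      have := intervalIntegral.norm_integral_le_of_norm_le_const
        (C := 1) (f := fun t => sin t / t) (a := 0) (b := w)
        (fun t _ => by rw [Real.norm_eq_abs]; exact sinc_abs_le t)
      rw [Real.norm_eq_abs] at this
      calc |∫ t in (0:ℝ)..w, sin t / t| ≤ 1 * |w - 0| := this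
        _ = w := by rw [sub_zero, habs]; ring
    have h1 : |(4 * (cos w - 1) + w * sin w + w ^ 2 * cos w) / (6 * w ^ 3)| ≤ w / 6 := by
      rw [abs_div, div_le_iff₀ (by rw [abs_of_pos (by positivity : (0:ℝ) < 6 * w ^ 3)]; positivity)]
      rw [abs_of_pos (show (0:ℝ) < 6 * w ^ 3 by positivity)]
      calc |4 * (cos w - 1) + w * sin w + w ^ 2 * cos w| ≤ w ^ 4 := hnum
        _ = w / 6 * (6 * w ^ 3) := by ring
    have h2 : |(1/6 : ℝ) * ∫ t in (0:ℝ)..w, sin t / t| ≤ 1/6 * w := by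
      rw [abs_mul, show |(1/6:ℝ)| = 1/6 by norm_num]
      linarith
    have := abs_add_le ((4 * (cos w - 1) + w * sin w + w ^ 2 * cos w) / (6 * w ^ 3))
      ((1/6 : ℝ) * ∫ t in (0:ℝ)..w, sin t / t)
    rw [FH]
    linarith
  have h1 : Tendsto (fun w : ℝ => w / 3) (𝓝[>] (0:ℝ)) (𝓝 0) := by
    have : Tendsto (fun w : ℝ => w / 3) (𝓝 (0:ℝ)) (𝓝 (0/3)) :=
      (continuous_id.div_const (3:ℝ)).tendsto 0
    simpa using this.mono_left nhdsWithin_le_nhds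
  have h2 : Tendsto (fun w : ℝ => -(w / 3)) (𝓝[>] (0:ℝ)) (𝓝 0) := by simpa using h1.neg
  apply tendsto_of_tendsto_of_tendsto_of_le_of_le' h2 h1
  · filter_upwards [Ioo_mem_nhdsGT_of_mem (by norm_num : (0:ℝ) ∈ Ico (0:ℝ) 1)] with w hw
    linarith [neg_abs_le (FH w), key w hw]
  · filter_upwards [Ioo_mem_nhdsGT_of_mem (by norm_num : (0:ℝ) ∈ Ico (0:ℝ) 1)] with w hw
    linarith [le_abs_self (FH w), key w hw]

lemma fH_half_integral :
    ∫ w in (0:ℝ)..(2 * π), fH w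
      = 1 / (12 * π) + (1/6) * ∫ t in (0:ℝ)..(2 * π), sin t / t := by
  have hπ : (0:ℝ) < π := Real.pi_pos
  have h2π : (0:ℝ) < 2 * π := by linarith
  have key := integral_eq_sub_of_hasDerivAt_of_tendsto (f := FH) (f' := fH) h2π
    (fun x hx => FH_hasDerivAt hx.1.ne') (fH_intervalIntegrable 0 (2*π))
    FH_tendsto_zero
    (((FH_hasDerivAt h2π.ne').continuousAt.tendsto).mono_left nhdsWithin_le_nhds)
  rw [key]
  simp only [FH, Real.cos_two_pi, Real.sin_two_pi]
  have hπ' : (π:ℝ) ≠ 0 := hπ.ne'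
  field_simp
  ring

lemma fH_even (w : ℝ) : fH (-w) = fH w := by
  unfold fH
  rw [Real.cos_neg, Real.sin_neg]
  ring_nf

lemma fH_full_integral :
    ∫ w in (-(2 * π))..(2 * π), fH w
      = 1 / (6 * π) + (1/3) * ∫ t in (0:ℝ)..(2 * π), sin t / t := by
  have hneg : ∫ w in (-(2*π))..(0:ℝ), fH w = ∫ w in (0:ℝ)..(2*π), fH w := by
    have h := intervalIntegral.integral_comp_neg (a := 0) (b := 2*π) fH
    simp only [fH_even, neg_zero] at h
    exact h.symm
  have hadd := intervalIntegral.integral_add_adjacent_intervals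
    (fH_intervalIntegrable (-(2*π)) 0) (fH_intervalIntegrable 0 (2*π))
  rw [← hadd, hneg, fH_half_integral]
  ring

/-- The Popp volume of the unit ball in the Heisenberg group:
`∫₀¹∫₀^{2π}∫_{-2π}^{2π} ρ³(2 - 2cos w - w sin w)/w⁴ dw dθ dρ = (1/12)(1 + 2π Si(2π))`.
(The integrand has a removable singularity at `w = 0`, a set of measure zero.) -/
theorem stmt7 :
    (∫ ρ in (0:ℝ)..1, ∫ θ in (0:ℝ)..(2 * π), ∫ w in (-(2 * π))..(2 * π),
        ρ ^ 3 * (2 - 2 * cos w - w * sin w) / w ^ 4)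
      = (1 / 12) * (1 + 2 * π * ∫ t in (0:ℝ)..(2 * π), sin t / t) := by
  have hπ : (π:ℝ) ≠ 0 := Real.pi_pos.ne'
  set S : ℝ := ∫ t in (0:ℝ)..(2 * π), sin t / t with hS
  have hinner : ∀ ρ : ℝ, (∫ w in (-(2 * π))..(2 * π),
      ρ ^ 3 * (2 - 2 * cos w - w * sin w) / w ^ 4)
      = ρ ^ 3 * (1 / (6 * π) + (1/3) * S) := by
    intro ρ
    rw [← fH_full_integral, ← intervalIntegral.integral_const_mul]
    congr 1
    funext w
    rw [fH]
    ring
  simp only [hinner]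
  simp only [intervalIntegral.integral_const, smul_eq_mul, sub_zero]
  have h1 : (fun ρ : ℝ => 2 * π * (ρ ^ 3 * (1 / (6 * π) + (1/3) * S)))
      = fun ρ : ℝ => (2 * π * (1 / (6 * π) + (1/3) * S)) * ρ ^ 3 := by
    funext ρ; ring
  have h2 := intervalIntegral.integral_const_mul (μ := volume) (a := (0:ℝ)) (b := 1)
    (2 * π * (1 / (6 * π) + (1/3) * S)) (fun ρ : ℝ => ρ ^ 3)
  rw [h1, h2, integral_pow]
  norm_num
  field_simp
  ring
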